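/- Let U be a finite set, (U_i)_{i∈I} a finite family of subsets of U, and let y, z be reals with z > 0 such that |U_i| ≥ z for all i, |U_i ∩ U_j| ≤ y for all i ≠ j, and z ≥ √(4|U|y). Then |I| ≤ 2|U|/z and Σ_{i∈I} |U_i| ≤ 2|U|. -/

import Mathlib

open Finset
set_option maxHeartbeats 1000000

lemma union_lb {α ι : Type*} [DecidableEq α] [DecidableEq ι] (Us : ι → Finset α)
    (T : Finset ι) :
    (∑ i ∈ T, ((Us i).card : ℝ)) ≤
      ((T.biUnion Us).card : ℝ) + (1/2) * ∑ i ∈ T, ∑ j ∈ T.erase i, ((Us i ∩ Us j).card : ℝ) := by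
  induction T using Finset.induction_on with
  | empty => simp
  | @insert a T ha ih =>
    have hB : ((insert a T).biUnion Us).card + ((Us a) ∩ T.biUnion Us).card
        = (Us a).card + (T.biUnion Us).card := by
      rw [Finset.biUnion_insert]
      exact Finset.card_union_add_card_inter _ _
    have hcap : ((Us a ∩ T.biUnion Us).card : ℝ) ≤ ∑ j ∈ T, ((Us a ∩ Us j).card : ℝ) := by
      have h1 : Us a ∩ T.biUnion Us = T.biUnion (fun j => Us a ∩ Us j) := by
        ext x; simp [Finset.mem_biUnion]; tauto
      rw [h1]
      exact_mod_cast Finset.card_biUnion_le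
    have hds : ∑ i ∈ insert a T, ∑ j ∈ (insert a T).erase i, ((Us i ∩ Us j).card : ℝ)
        = 2 * (∑ j ∈ T, ((Us a ∩ Us j).card : ℝ))
          + ∑ i ∈ T, ∑ j ∈ T.erase i, ((Us i ∩ Us j).card : ℝ) := by
      rw [Finset.sum_insert ha, Finset.erase_insert ha]
      have h2 : ∀ i ∈ T, ∑ j ∈ (insert a T).erase i, ((Us i ∩ Us j).card : ℝ)
          = ((Us i ∩ Us a).card : ℝ) + ∑ j ∈ T.erase i, ((Us i ∩ Us j).card : ℝ) := by
        intro i hi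
        have hne : i ≠ a := fun h => ha (h ▸ hi)
        rw [Finset.erase_insert_of_ne hne.symm, Finset.sum_insert (fun h => ha (Finset.mem_of_mem_erase h))]
      rw [Finset.sum_congr rfl h2, Finset.sum_add_distrib]
      have h3 : ∀ i ∈ T, ((Us i ∩ Us a).card : ℝ) = ((Us a ∩ Us i).card : ℝ) := by
        intro i _; rw [Finset.inter_comm]
      rw [Finset.sum_congr rfl h3]
      ring
    rw [Finset.sum_insert ha, hds]
    have hB' : (((insert a T).biUnion Us).card : ℝ)
        = ((Us a).card : ℝ) + ((T.biUnion Us).card : ℝ) - ((Us a ∩ T.biUnion Us).card : ℝ) := by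
      have := hB
      push_cast
      have : (((insert a T).biUnion Us).card : ℝ) + ((Us a ∩ T.biUnion Us).card : ℝ)
          = ((Us a).card : ℝ) + ((T.biUnion Us).card : ℝ) := by exact_mod_cast hB
      linarith
    rw [hB']
    linarith

theorem stmt_9 {α ι : Type*} [DecidableEq α] (U : Finset α) (I : Finset ι)
    (Us : ι → Finset α) (y z : ℝ) (hz : 0 < z)
    (hsub : ∀ i ∈ I, Us i ⊆ U)
    (hlarge : ∀ i ∈ I, z ≤ (Us i).card)
    (hinter : ∀ i ∈ I, ∀ j ∈ I, i ≠ j → ((Us i ∩ Us j).card : ℝ) ≤ y)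
    (hzy : Real.sqrt (4 * U.card * y) ≤ z) :
    (I.card : ℝ) ≤ 2 * U.card / z ∧ (∑ i ∈ I, ((Us i).card : ℝ)) ≤ 2 * U.card := by
  classical
  set N := (U.card : ℝ) with hNdef
  have hN0 : 0 ≤ N := by positivity
  have h4 : 4 * N * y ≤ z ^ 2 := by
    rcases le_or_gt (4 * N * y) 0 with h | h
    · nlinarith
    · nlinarith [Real.sq_sqrt h.le, Real.sqrt_nonneg (4 * N * y)]
  rcases I.eq_empty_or_nonempty with rfl | ⟨i0, hi0⟩
  · constructor
    · simp only [Finset.card_empty, Nat.cast_zero]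
      positivity
    · simp only [Finset.sum_empty]
      positivity
  have hzN : z ≤ N := by
    refine le_trans (hlarge i0 hi0) ?_
    rw [hNdef]
    exact_mod_cast Finset.card_le_card (hsub i0 hi0)
  have hNpos : 0 < N := lt_of_lt_of_le hz hzN
  -- generic bound for a subfamily T of size m
  have key : ∀ T : Finset ι, T ⊆ I →
      (T.card : ℝ) * z ≤ N + (1/2) * (T.card * (T.card - 1)) * y ∨
      (T.card : ℝ) * z ≤ N := by
    intro T hTI
    have h1 : (T.card : ℝ) * z ≤ ∑ i ∈ T, ((Us i).card : ℝ) := by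
      rw [mul_comm]
      calc (z : ℝ) * T.card = ∑ _i ∈ T, z := by rw [Finset.sum_const]; ring
      _ ≤ _ := Finset.sum_le_sum (fun i hi => hlarge i (hTI hi))
    have h2 := union_lb Us T
    have h3 : ((T.biUnion Us).card : ℝ) ≤ N := by
      have : T.biUnion Us ⊆ U := Finset.biUnion_subset.mpr (fun i hi => hsub i (hTI hi))
      rw [hNdef]
      exact_mod_cast Finset.card_le_card this
    have h5 : ∑ i ∈ T, ∑ j ∈ T.erase i, ((Us i ∩ Us j).card : ℝ)
        ≤ (T.card : ℝ) * ((T.card - 1) * y) ∨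
        ∑ i ∈ T, ∑ j ∈ T.erase i, ((Us i ∩ Us j).card : ℝ) ≤ 0 := by
      rcases le_or_gt y 0 with hy | hy
      · right
        apply Finset.sum_nonpos
        intro i hi
        apply Finset.sum_nonpos
        intro j hj
        exact le_trans (hinter i (hTI hi) j (hTI (Finset.mem_of_mem_erase hj))
          (Finset.ne_of_mem_erase hj).symm) hy
      · left
        calc ∑ i ∈ T, ∑ j ∈ T.erase i, ((Us i ∩ Us j).card : ℝ)
            ≤ ∑ _i ∈ T, ((T.card - 1 : ℝ) * y) := by
              apply Finset.sum_le_sum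
              intro i hi
              calc ∑ j ∈ T.erase i, ((Us i ∩ Us j).card : ℝ)
                  ≤ ∑ _j ∈ T.erase i, y := by
                    apply Finset.sum_le_sum
                    intro j hj
                    exact hinter i (hTI hi) j (hTI (Finset.mem_of_mem_erase hj))
                      (Finset.ne_of_mem_erase hj).symm
                _ = ((T.erase i).card : ℝ) * y := by rw [Finset.sum_const]; simp [mul_comm]
                _ ≤ (T.card - 1 : ℝ) * y := by
                    apply mul_le_mul_of_nonneg_right _ hy.le
                    rw [Finset.card_erase_of_mem hi]
                    push_cast [Nat.cast_sub (Finset.one_le_card.mpr ⟨i, hi⟩)]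
                    simp
          _ = (T.card : ℝ) * ((T.card - 1) * y) := by rw [Finset.sum_const]; ring
    rcases h5 with h5 | h5
    · left; nlinarith
    · right; nlinarith
  have part1 : (I.card : ℝ) ≤ 2 * N / z := by
    by_contra hcon
    push_neg at hcon
    set m : ℕ := ⌊2 * N / z⌋₊ + 1 with hm
    have hx0 : 0 ≤ 2 * N / z := by positivity
    have hmgt : 2 * N / z < (m : ℝ) := by
      rw [hm]
      push_cast
      exact Nat.lt_floor_add_one _
    have hmle : (m : ℝ) ≤ 2 * N / z + 1 := by
      rw [hm]
      push_cast
      have := Nat.floor_le hx0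
      linarith
    have hmI : m ≤ I.card := by
      have : (⌊2 * N / z⌋₊ : ℝ) < (I.card : ℝ) := lt_of_le_of_lt (Nat.floor_le hx0) hcon
      exact Nat.add_one_le_iff.mpr (by exact_mod_cast this)
    obtain ⟨T, hTI, hTcard⟩ := Finset.exists_subset_card_eq hmI
    have hm1 : 1 ≤ (m : ℝ) := by exact_mod_cast Nat.one_le_iff_ne_zero.mpr (by omega)
    have hmz : 2 * N < (m : ℝ) * z := by
      rw [div_lt_iff₀ hz] at hmgt
      linarith
    have hmz3 : (m : ℝ) * z ≤ 3 * N := by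
      have h2Nz : 2 * N / z * z = 2 * N := div_mul_cancel₀ _ (ne_of_gt hz)
      nlinarith [mul_le_mul_of_nonneg_right hmle hz.le]
    rcases key T hTI with hk | hk <;> rw [hTcard] at hk
    · have e1 : 0 ≤ (m:ℝ) * ((m:ℝ) - 1) := by nlinarith
      rcases le_or_gt y 0 with hy | hy
      · nlinarith [mul_nonpos_of_nonneg_of_nonpos e1 hy]
      · have e2 : (m:ℝ) * ((m:ℝ) - 1) * (4 * N * y) ≤ ((m:ℝ) * z)^2 := by
          nlinarith [mul_le_mul_of_nonneg_left h4 e1,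
            mul_nonneg (le_trans zero_le_one hm1) (sq_nonneg z)]
        have e3 : 8 * N * ((m:ℝ) * z) ≤ 8 * N^2 + ((m:ℝ) * z)^2 := by
          nlinarith [mul_le_mul_of_nonneg_left hk (by linarith : (0:ℝ) ≤ 8 * N)]
        nlinarith [mul_nonneg (sub_nonneg.mpr hmz.le) (sub_nonneg.mpr hmz3)]
    · nlinarith
  refine ⟨part1, ?_⟩
  have hkz : (I.card : ℝ) * z ≤ 2 * N := by
    rw [le_div_iff₀ hz] at part1
    linarith
  have h1 : ∑ i ∈ I, ((Us i).card : ℝ) ≤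
      ((I.biUnion Us).card : ℝ) + (1/2) * ∑ i ∈ I, ∑ j ∈ I.erase i, ((Us i ∩ Us j).card : ℝ) :=
    union_lb Us I
  have h3 : ((I.biUnion Us).card : ℝ) ≤ N := by
    have : I.biUnion Us ⊆ U := Finset.biUnion_subset.mpr hsub
    rw [hNdef]
    exact_mod_cast Finset.card_le_card this
  have h5 : ∑ i ∈ I, ∑ j ∈ I.erase i, ((Us i ∩ Us j).card : ℝ) ≤ N ∨
      ∑ i ∈ I, ∑ j ∈ I.erase i, ((Us i ∩ Us j).card : ℝ) ≤ 0 := by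
    rcases le_or_gt y 0 with hy | hy
    · right
      apply Finset.sum_nonpos; intro i hi
      apply Finset.sum_nonpos; intro j hj
      exact le_trans (hinter i hi j (Finset.mem_of_mem_erase hj)
        (Finset.ne_of_mem_erase hj).symm) hy
    · left
      have hb : ∑ i ∈ I, ∑ j ∈ I.erase i, ((Us i ∩ Us j).card : ℝ)
          ≤ (I.card : ℝ) * ((I.card : ℝ) * y) := by
        calc ∑ i ∈ I, ∑ j ∈ I.erase i, ((Us i ∩ Us j).card : ℝ)
            ≤ ∑ _i ∈ I, ((I.card : ℝ) * y) := by
              apply Finset.sum_le_sum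
              intro i hi
              calc ∑ j ∈ I.erase i, ((Us i ∩ Us j).card : ℝ)
                  ≤ ∑ _j ∈ I.erase i, y := by
                    apply Finset.sum_le_sum
                    intro j hj
                    exact hinter i hi j (Finset.mem_of_mem_erase hj)
                      (Finset.ne_of_mem_erase hj).symm
                _ = ((I.erase i).card : ℝ) * y := by rw [Finset.sum_const]; simp [mul_comm]
                _ ≤ (I.card : ℝ) * y := by
                    apply mul_le_mul_of_nonneg_right _ hy.le
                    exact_mod_cast Finset.card_le_card (Finset.erase_subset _ _)
          _ = (I.card : ℝ) * ((I.card : ℝ) * y) := by rw [Finset.sum_const]; ring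
      have hk2 : (I.card : ℝ) * ((I.card : ℝ) * y) ≤ N := by
        have hkk : (0:ℝ) ≤ (I.card : ℝ) * z := by positivity
        have hsq : ((I.card : ℝ) * z)^2 ≤ (2*N)^2 := by nlinarith
        nlinarith [mul_le_mul_of_nonneg_right hsq hy.le,
          mul_le_mul_of_nonneg_left h4 hN0, mul_pos hz hz]
      linarith
  rcases h5 with h5 | h5 <;> linarith
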